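/- Let I ⊆ K[x_0,…,x_n] be a homogeneous ideal and w_1, w_2 ∈ Γ^{n+1} be such that both in_{w_1}(I) and in_{w_2}(I) are monomial ideals. Then in_{w_2}(I) is not strictly contained in in_{w_1}(I). -/

import Mathlib

open MvPolynomial
open scoped Classical

noncomputable section

/-- Dot product `w·u` of a real weight vector with a nonnegative exponent vector. -/
def dotN {m : ℕ} (w : Fin m → ℝ) (u : Fin m →₀ ℕ) : ℝ := ∑ i, w i * (u i : ℝ)

/-- Dot product `w·u` of a real weight vector with an integer exponent vector. -/
def dotZ {n : ℕ} (w : Fin n → ℝ) (u : Fin n → ℤ) : ℝ := ∑ i, w i * (u i : ℝ)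

/-- Dot product of two real vectors. -/
def dotR {m : ℕ} (c x : Fin m → ℝ) : ℝ := ∑ i, c i * x i

/-- A field `K` together with: a nontrivial real-valued (additive) valuation
`val : K* → ℝ` (recorded as a function on `K`, constrained only at nonzero elements);
a residue field `𝕜` with the reduction map `res : K → 𝕜` (the canonical map
`R → 𝕜 = R/𝔪` on the valuation ring `R = {a : val a ≥ 0}`, junk elsewhere); and a fixed
splitting `t` of the valuation, i.e. a group-homomorphic section `w ↦ t^w` of `val`
defined on the value group `Γ = im val`. -/
structure ValSetup (K 𝕜 : Type) [Field K] [Field 𝕜] where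
  val : K → ℝ
  val_mul : ∀ {a b : K}, a ≠ 0 → b ≠ 0 → val (a * b) = val a + val b
  val_add : ∀ {a b : K}, a ≠ 0 → b ≠ 0 → a + b ≠ 0 → min (val a) (val b) ≤ val (a + b)
  val_one : val 1 = 0
  val_nontrivial : ∃ a : K, a ≠ 0 ∧ val a ≠ 0
  res : K → 𝕜
  res_add : ∀ {a b : K}, (a = 0 ∨ 0 ≤ val a) → (b = 0 ∨ 0 ≤ val b) → res (a + b) = res a + res b
  res_mul : ∀ {a b : K}, (a = 0 ∨ 0 ≤ val a) → (b = 0 ∨ 0 ≤ val b) → res (a * b) = res a * res b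
  res_one : res 1 = 1
  res_zero : res 0 = 0
  res_eq_zero_iff : ∀ {a : K}, a ≠ 0 → 0 ≤ val a → (res a = 0 ↔ 0 < val a)
  res_surjective : ∀ c : 𝕜, ∃ a : K, (a = 0 ∨ 0 ≤ val a) ∧ res a = c
  t : ℝ → K
  t_ne_zero : ∀ {r : ℝ}, (∃ a : K, a ≠ 0 ∧ val a = r) → t r ≠ 0
  t_add : ∀ {r₁ r₂ : ℝ}, (∃ a : K, a ≠ 0 ∧ val a = r₁) → (∃ a : K, a ≠ 0 ∧ val a = r₂) →
    t (r₁ + r₂) = t r₁ * t r₂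
  val_t : ∀ {r : ℝ}, (∃ a : K, a ≠ 0 ∧ val a = r) → val (t r) = r

namespace ValSetup

variable {K 𝕜 : Type} [Field K] [Field 𝕜]

/-- The value group `Γ = val(K*) ⊆ ℝ`. -/
def Gamma (V : ValSetup K 𝕜) : Set ℝ := {r : ℝ | ∃ a : K, a ≠ 0 ∧ V.val a = r}

/-- `trop(f)(w) = min { val(c_u) + w·u : c_u ≠ 0 }` for `f = Σ_u c_u x^u ∈ K[x_0,…,x_{m-1}]`. -/
def trop (V : ValSetup K 𝕜) {m : ℕ} (f : MvPolynomial (Fin m) K) (w : Fin m → ℝ) : ℝ :=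
  sInf ((fun u => V.val (coeff u f) + dotN w u) '' (f.support : Set (Fin m →₀ ℕ)))

/-- The initial form `in_w(f) = Σ_{val(c_u)+w·u = trop(f)(w)} (t^{-val(c_u)} c_u)‾ x^u`
in `𝕜[x_0,…,x_{m-1}]`. -/
def initialForm (V : ValSetup K 𝕜) {m : ℕ} (w : Fin m → ℝ) (f : MvPolynomial (Fin m) K) :
    MvPolynomial (Fin m) 𝕜 :=
  ∑ u ∈ f.support.filter (fun u => V.val (coeff u f) + dotN w u = V.trop f w),
    monomial u (V.res (V.t (-(V.val (coeff u f))) * coeff u f))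

/-- The initial ideal `in_w(I) = ⟨in_w(f) : f ∈ I⟩ ⊆ 𝕜[x_0,…,x_{m-1}]`. -/
def initialIdeal (V : ValSetup K 𝕜) {m : ℕ} (w : Fin m → ℝ)
    (I : Ideal (MvPolynomial (Fin m) K)) : Ideal (MvPolynomial (Fin m) 𝕜) :=
  Ideal.span {g | ∃ f ∈ I, g = V.initialForm w f}

/-- The Gröbner region `C_I[w] = {w' ∈ Γ^m : in_{w'}(I) = in_w(I)}`. -/
def groebnerRegion (V : ValSetup K 𝕜) {m : ℕ} (I : Ideal (MvPolynomial (Fin m) K))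
    (w : Fin m → ℝ) : Set (Fin m → ℝ) :=
  {w' | (∀ i, w' i ∈ V.Gamma) ∧ V.initialIdeal w' I = V.initialIdeal w I}

end ValSetup

/-- `trop(g)(v) = min { v·u : c_u ≠ 0 }` for `g ∈ 𝕜[x]`, w.r.t. the trivial valuation on `𝕜`. -/
def tropTriv {𝕜 : Type} [Field 𝕜] {m : ℕ} (g : MvPolynomial (Fin m) 𝕜) (v : Fin m → ℝ) : ℝ :=
  sInf ((fun u => dotN v u) '' (g.support : Set (Fin m →₀ ℕ)))

/-- Initial form `in_v(g)`, w.r.t. the trivial valuation on the residue field: the sum of the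
terms of `g` whose exponents `u` minimize `v·u`. -/
def initialFormTriv {𝕜 : Type} [Field 𝕜] {m : ℕ} (v : Fin m → ℝ) (g : MvPolynomial (Fin m) 𝕜) :
    MvPolynomial (Fin m) 𝕜 :=
  ∑ u ∈ g.support.filter (fun u => dotN v u = tropTriv g v), monomial u (coeff u g)

/-- Initial ideal `in_v(J) = ⟨in_v(g) : g ∈ J⟩` w.r.t. the trivial valuation. -/
def initialIdealTriv {𝕜 : Type} [Field 𝕜] {m : ℕ} (v : Fin m → ℝ)
    (J : Ideal (MvPolynomial (Fin m) 𝕜)) : Ideal (MvPolynomial (Fin m) 𝕜) :=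
  Ideal.span {h | ∃ g ∈ J, h = initialFormTriv v g}

/-- A homogeneous ideal of `R[x_0,…,x_{m-1}]`: one containing all homogeneous components of
its elements. -/
def IsHomogIdeal {R : Type} [CommSemiring R] {m : ℕ} (I : Ideal (MvPolynomial (Fin m) R)) :
    Prop :=
  ∀ f ∈ I, ∀ d : ℕ, homogeneousComponent d f ∈ I

/-- A monomial ideal: an ideal generated by monomials. -/
def IsMonomialIdeal {R : Type} [CommSemiring R] {m : ℕ} (J : Ideal (MvPolynomial (Fin m) R)) :
    Prop :=
  ∃ S : Set (Fin m →₀ ℕ), J = Ideal.span ((fun u => (monomial u 1 : MvPolynomial (Fin m) R)) '' S)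

-- ===================== Auxiliary development =====================

lemma dotN_add' {m : ℕ} (w : Fin m → ℝ) (α u : Fin m →₀ ℕ) :
    dotN w (α + u) = dotN w α + dotN w u := by
  simp [dotN, Finsupp.add_apply, mul_add, Finset.sum_add_distrib]

namespace ValSetup

variable {K 𝕜 : Type} [Field K] [Field 𝕜] (V : ValSetup K 𝕜)

lemma zero_mem_gamma : (0 : ℝ) ∈ V.Gamma := ⟨1, one_ne_zero, V.val_one⟩

lemma val_inv {a : K} (ha : a ≠ 0) : V.val a⁻¹ = -V.val a := by
  have h := V.val_mul ha (inv_ne_zero ha)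
  rw [mul_inv_cancel₀ ha, V.val_one] at h
  linarith

lemma gamma_add {r s : ℝ} (hr : r ∈ V.Gamma) (hs : s ∈ V.Gamma) : r + s ∈ V.Gamma := by
  obtain ⟨a, ha, rfl⟩ := hr; obtain ⟨b, hb, rfl⟩ := hs
  exact ⟨a * b, mul_ne_zero ha hb, V.val_mul ha hb⟩

lemma gamma_neg {r : ℝ} (hr : r ∈ V.Gamma) : -r ∈ V.Gamma := by
  obtain ⟨a, ha, rfl⟩ := hr
  exact ⟨a⁻¹, inv_ne_zero ha, V.val_inv ha⟩

lemma gamma_nsmul {r : ℝ} (hr : r ∈ V.Gamma) (k : ℕ) : (k : ℝ) * r ∈ V.Gamma := by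
  induction k with
  | zero => simpa using V.zero_mem_gamma
  | succ k ih => push_cast; rw [add_mul, one_mul]; exact V.gamma_add ih hr

lemma dotN_mem_gamma {m : ℕ} {w : Fin m → ℝ} (hw : ∀ i, w i ∈ V.Gamma) (u : Fin m →₀ ℕ) :
    dotN w u ∈ V.Gamma := by
  rw [dotN]
  classical
  refine Finset.sum_induction _ (fun r => r ∈ V.Gamma) (fun a b => V.gamma_add) V.zero_mem_gamma ?_
  intro i _
  rw [mul_comm]
  exact V.gamma_nsmul (hw i) (u i)

lemma t_zero : V.t 0 = 1 := by
  have h0 : (0 : ℝ) ∈ V.Gamma := V.zero_mem_gamma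
  have h := V.t_add h0 h0
  rw [add_zero] at h
  have hne : V.t 0 ≠ 0 := V.t_ne_zero h0
  field_simp at h
  tauto

lemma res_ne_zero_of_val_zero {a : K} (ha : a ≠ 0) (hv : V.val a = 0) : V.res a ≠ 0 := by
  intro h
  rw [V.res_eq_zero_iff ha hv.ge] at h
  exact absurd hv h.ne'

lemma res_eq_zero_of_val_pos {a : K} (hv : 0 < V.val a) : V.res a = 0 := by
  by_cases ha : a = 0
  · simp [ha, V.res_zero]
  · exact (V.res_eq_zero_iff ha hv.le).2 hv

end ValSetup
namespace ValSetup

variable {K 𝕜 : Type} [Field K] [Field 𝕜] (V : ValSetup K 𝕜) {m : ℕ}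

/-- Coefficientwise reduction map: `π(f)_u = res(t^{w·u} c_u)`. -/
def piW (w : Fin m → ℝ) (f : MvPolynomial (Fin m) K) : MvPolynomial (Fin m) 𝕜 :=
  ∑ u ∈ f.support, monomial u (V.res (V.t (dotN w u) * coeff u f))

lemma coeff_piW (w : Fin m → ℝ) (f : MvPolynomial (Fin m) K) (u : Fin m →₀ ℕ) :
    coeff u (V.piW w f) = V.res (V.t (dotN w u) * coeff u f) := by
  classical
  rw [piW, coeff_sum]
  by_cases hu : u ∈ f.support
  · rw [Finset.sum_eq_single u]
    · simp [coeff_monomial]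
    · intro b _ hb; simp [coeff_monomial, hb]
    · intro h; exact absurd hu h
  · rw [Finset.sum_eq_zero]
    · rw [notMem_support_iff.1 hu, mul_zero, V.res_zero]
    · intro b hb
      have hbu : b ≠ u := fun h => hu (h ▸ hb)
      simp [coeff_monomial, hbu]

/-- `f` lies (up to the normalization) in the lattice `L`: all coefficient
valuations `val c_u + w·u` are nonnegative. -/
def Lmem (w : Fin m → ℝ) (f : MvPolynomial (Fin m) K) : Prop :=
  ∀ u, coeff u f ≠ 0 → 0 ≤ V.val (coeff u f) + dotN w u

lemma arg_cond {w : Fin m → ℝ} (hw : ∀ i, w i ∈ V.Gamma) {f : MvPolynomial (Fin m) K}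
    (hf : V.Lmem w f) (u : Fin m →₀ ℕ) :
    V.t (dotN w u) * coeff u f = 0 ∨ 0 ≤ V.val (V.t (dotN w u) * coeff u f) := by
  by_cases hc : coeff u f = 0
  · left; rw [hc, mul_zero]
  · right
    have htne : V.t (dotN w u) ≠ 0 := V.t_ne_zero (V.dotN_mem_gamma hw u)
    rw [V.val_mul htne hc, V.val_t (V.dotN_mem_gamma hw u)]
    have := hf u hc
    linarith

lemma Lmem_zero (w : Fin m → ℝ) : V.Lmem w (0 : MvPolynomial (Fin m) K) := by
  intro u hu; simp at hu

lemma Lmem_add {w : Fin m → ℝ} {f g : MvPolynomial (Fin m) K}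
    (hf : V.Lmem w f) (hg : V.Lmem w g) : V.Lmem w (f + g) := by
  intro u hu
  rw [coeff_add] at hu ⊢
  by_cases hc : coeff u f = 0
  · rw [hc, zero_add] at hu ⊢; exact hg u hu
  by_cases hd : coeff u g = 0
  · rw [hd, add_zero] at hu ⊢; exact hf u hu
  · have := V.val_add hc hd hu
    have h1 := hf u hc
    have h2 := hg u hd
    rcases min_le_iff.1 (le_refl (min (V.val (coeff u f)) (V.val (coeff u g)))) with _ | _ <;>
    · rcases le_total (V.val (coeff u f)) (V.val (coeff u g)) with hle | hle
      · rw [min_eq_left hle] at this; linarith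
      · rw [min_eq_right hle] at this; linarith

lemma Lmem_smul {w : Fin m → ℝ} {a : K} (ha : a = 0 ∨ 0 ≤ V.val a)
    {f : MvPolynomial (Fin m) K} (hf : V.Lmem w f) : V.Lmem w (a • f) := by
  intro u hu
  rw [coeff_smul, smul_eq_mul] at hu ⊢
  have ha' : a ≠ 0 := fun h => hu (by rw [h, zero_mul])
  have hc : coeff u f ≠ 0 := fun h => hu (by rw [h, mul_zero])
  rcases ha with h | h
  · exact absurd h ha'
  · rw [V.val_mul ha' hc]
    have := hf u hc
    linarith

lemma piW_zero (w : Fin m → ℝ) : V.piW w (0 : MvPolynomial (Fin m) K) = 0 := by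
  simp [piW]

lemma piW_add {w : Fin m → ℝ} (hw : ∀ i, w i ∈ V.Gamma) {f g : MvPolynomial (Fin m) K}
    (hf : V.Lmem w f) (hg : V.Lmem w g) : V.piW w (f + g) = V.piW w f + V.piW w g := by
  ext u
  rw [coeff_add, coeff_piW, coeff_piW, coeff_piW, coeff_add, mul_add]
  exact V.res_add (V.arg_cond hw hf u) (V.arg_cond hw hg u)

lemma piW_smul {w : Fin m → ℝ} (hw : ∀ i, w i ∈ V.Gamma) {a : K} (ha : a = 0 ∨ 0 ≤ V.val a)
    {f : MvPolynomial (Fin m) K} (hf : V.Lmem w f) :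
    V.piW w (a • f) = V.res a • V.piW w f := by
  ext u
  rw [coeff_smul, coeff_piW, coeff_piW, coeff_smul, smul_eq_mul, smul_eq_mul]
  rw [show V.t (dotN w u) * (a * coeff u f) = a * (V.t (dotN w u) * coeff u f) by ring]
  exact V.res_mul ha (V.arg_cond hw hf u)

lemma Lmem_sum {w : Fin m → ℝ} {ι : Type} (s : Finset ι) (f : ι → MvPolynomial (Fin m) K)
    (hf : ∀ i ∈ s, V.Lmem w (f i)) : V.Lmem w (∑ i ∈ s, f i) := by
  classical
  induction s using Finset.induction_on with
  | empty => simpa using V.Lmem_zero w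
  | @insert a s' hx hs' =>
      rw [Finset.sum_insert hx]
      exact V.Lmem_add (hf a (Finset.mem_insert_self a s'))
        ((hs' fun i hi => hf i (Finset.mem_insert_of_mem hi)))

lemma piW_sum {w : Fin m → ℝ} (hw : ∀ i, w i ∈ V.Gamma) {ι : Type} (s : Finset ι)
    (f : ι → MvPolynomial (Fin m) K) (hf : ∀ i ∈ s, V.Lmem w (f i)) :
    V.piW w (∑ i ∈ s, f i) = ∑ i ∈ s, V.piW w (f i) := by
  classical
  induction s using Finset.induction_on with
  | empty => simpa using V.piW_zero w
  | @insert a s' hx hs' =>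
      rw [Finset.sum_insert hx, Finset.sum_insert hx,
        V.piW_add hw (hf a (Finset.mem_insert_self a s'))
          (V.Lmem_sum _ _ fun i hi => hf i (Finset.mem_insert_of_mem hi)),
        hs' fun i hi => hf i (Finset.mem_insert_of_mem hi)]

end ValSetup
namespace ValSetup

variable {K 𝕜 : Type} [Field K] [Field 𝕜] (V : ValSetup K 𝕜) {m : ℕ}

lemma trop_le {w : Fin m → ℝ} {f : MvPolynomial (Fin m) K} {u : Fin m →₀ ℕ}
    (hu : u ∈ f.support) : V.trop f w ≤ V.val (coeff u f) + dotN w u := by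
  have hfin : ((fun u => V.val (coeff u f) + dotN w u) '' (f.support : Set (Fin m →₀ ℕ))).Finite :=
    (f.support.finite_toSet).image _
  exact csInf_le hfin.bddBelow ⟨u, hu, rfl⟩

lemma exists_trop_eq {w : Fin m → ℝ} {f : MvPolynomial (Fin m) K} (hf : f ≠ 0) :
    ∃ u ∈ f.support, V.val (coeff u f) + dotN w u = V.trop f w := by
  have hne : ((fun u => V.val (coeff u f) + dotN w u) '' (f.support : Set (Fin m →₀ ℕ))).Nonempty := by
    rw [Set.image_nonempty]
    exact Finset.coe_nonempty.2 (support_nonempty.2 hf)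
  have hfin : ((fun u => V.val (coeff u f) + dotN w u) '' (f.support : Set (Fin m →₀ ℕ))).Finite :=
    (f.support.finite_toSet).image _
  obtain ⟨u, hu, he⟩ := hne.csInf_mem hfin
  exact ⟨u, hu, he⟩

lemma trop_mem_gamma {w : Fin m → ℝ} (hw : ∀ i, w i ∈ V.Gamma) {f : MvPolynomial (Fin m) K}
    (hf : f ≠ 0) : V.trop f w ∈ V.Gamma := by
  obtain ⟨u, hu, he⟩ := V.exists_trop_eq (w := w) hf
  rw [← he]
  exact V.gamma_add ⟨_, mem_support_iff.1 hu, rfl⟩ (V.dotN_mem_gamma hw u)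

lemma coeff_initialForm (w : Fin m → ℝ) (f : MvPolynomial (Fin m) K) (u : Fin m →₀ ℕ) :
    coeff u (V.initialForm w f) =
      if u ∈ f.support ∧ V.val (coeff u f) + dotN w u = V.trop f w then
        V.res (V.t (-V.val (coeff u f)) * coeff u f) else 0 := by
  classical
  rw [initialForm, coeff_sum]
  by_cases hu : u ∈ f.support.filter (fun u => V.val (coeff u f) + dotN w u = V.trop f w)
  · rw [Finset.sum_eq_single u]
    · rw [Finset.mem_filter] at hu
      simp [coeff_monomial, hu.1, hu.2]
    · intro b _ hb; simp [coeff_monomial, hb]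
    · intro h; exact absurd hu h
  · rw [Finset.sum_eq_zero]
    · rw [Finset.mem_filter] at hu
      rw [if_neg hu]
    · intro b hb
      have hbu : b ≠ u := fun h => hu (h ▸ hb)
      simp [coeff_monomial, hbu]

lemma support_smul_eq {a : K} (ha : a ≠ 0) (f : MvPolynomial (Fin m) K) :
    (a • f).support = f.support := by
  ext u
  simp [mem_support_iff, coeff_smul, smul_eq_mul, ha]

lemma trop_smul {w : Fin m → ℝ} {a : K} (ha : a ≠ 0) {f : MvPolynomial (Fin m) K} (hf : f ≠ 0) :
    V.trop (a • f) w = V.val a + V.trop f w := by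
  have haf : a • f ≠ 0 := smul_ne_zero ha hf
  apply le_antisymm
  · obtain ⟨u, hu, he⟩ := V.exists_trop_eq (w := w) hf
    have hu' : u ∈ (a • f).support := by rw [support_smul_eq ha]; exact hu
    have := V.trop_le (w := w) hu'
    rw [coeff_smul, smul_eq_mul, V.val_mul ha (mem_support_iff.1 hu)] at this
    linarith
  · obtain ⟨u, hu, he⟩ := V.exists_trop_eq (w := w) haf
    rw [support_smul_eq ha] at hu
    rw [coeff_smul, smul_eq_mul, V.val_mul ha (mem_support_iff.1 hu)] at he
    have := V.trop_le (w := w) (f := f) hu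
    linarith

lemma Lmem_of_trop_nonneg {w : Fin m → ℝ} {f : MvPolynomial (Fin m) K}
    (h : 0 ≤ V.trop f w) : V.Lmem w f := by
  intro u hu
  exact le_trans h (V.trop_le (mem_support_iff.2 hu))

lemma trop_nonneg_of_Lmem {w : Fin m → ℝ} {f : MvPolynomial (Fin m) K} (hf : f ≠ 0)
    (h : V.Lmem w f) : 0 ≤ V.trop f w := by
  obtain ⟨u, hu, he⟩ := V.exists_trop_eq (w := w) hf
  rw [← he]
  exact h u (mem_support_iff.1 hu)

lemma initialForm_eq_piW {w : Fin m → ℝ} (hw : ∀ i, w i ∈ V.Gamma)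
    {f : MvPolynomial (Fin m) K} (hf : f ≠ 0) :
    V.initialForm w f = V.piW w (V.t (-(V.trop f w)) • f) := by
  have hγ : -(V.trop f w) ∈ V.Gamma := V.gamma_neg (V.trop_mem_gamma hw hf)
  have htne : V.t (-(V.trop f w)) ≠ 0 := V.t_ne_zero hγ
  ext u
  rw [coeff_initialForm, coeff_piW, coeff_smul, smul_eq_mul]
  by_cases hu : u ∈ f.support
  · have hc : coeff u f ≠ 0 := mem_support_iff.1 hu
    have harg : V.t (dotN w u) * (V.t (-(V.trop f w)) * coeff u f)
        = V.t (dotN w u + -(V.trop f w)) * coeff u f := by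
      rw [V.t_add (V.dotN_mem_gamma hw u) hγ]; ring
    by_cases hmin : V.val (coeff u f) + dotN w u = V.trop f w
    · have heq : dotN w u + -(V.trop f w) = -V.val (coeff u f) := by linarith
      rw [if_pos ⟨hu, hmin⟩, harg, heq]
    · rw [if_neg (fun h => hmin h.2), harg]
      have hargne : V.t (dotN w u + -(V.trop f w)) * coeff u f ≠ 0 :=
        mul_ne_zero (V.t_ne_zero (V.gamma_add (V.dotN_mem_gamma hw u) hγ)) hc
      have hlt : V.trop f w < V.val (coeff u f) + dotN w u :=
        lt_of_le_of_ne (V.trop_le hu) (Ne.symm hmin)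
      refine (V.res_eq_zero_of_val_pos ?_).symm
      rw [V.val_mul (V.t_ne_zero (V.gamma_add (V.dotN_mem_gamma hw u) hγ)) hc,
        V.val_t (V.gamma_add (V.dotN_mem_gamma hw u) hγ)]
      linarith
  · rw [if_neg (fun h => hu h.1), notMem_support_iff.1 hu, mul_zero, mul_zero, V.res_zero]

lemma piW_eq_zero_of_trop_pos {w : Fin m → ℝ} (hw : ∀ i, w i ∈ V.Gamma)
    {f : MvPolynomial (Fin m) K} (h : 0 < V.trop f w) : V.piW w f = 0 := by
  ext u
  rw [coeff_piW, coeff_zero]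
  by_cases hc : coeff u f = 0
  · rw [hc, mul_zero, V.res_zero]
  · have htne : V.t (dotN w u) ≠ 0 := V.t_ne_zero (V.dotN_mem_gamma hw u)
    apply V.res_eq_zero_of_val_pos
    rw [V.val_mul htne hc, V.val_t (V.dotN_mem_gamma hw u)]
    have := V.trop_le (w := w) (mem_support_iff.2 hc)
    linarith

lemma piW_eq_initialForm_of_trop_zero {w : Fin m → ℝ} (hw : ∀ i, w i ∈ V.Gamma)
    {f : MvPolynomial (Fin m) K} (hf : f ≠ 0) (h : V.trop f w = 0) :
    V.piW w f = V.initialForm w f := by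
  rw [V.initialForm_eq_piW hw hf, h, neg_zero, V.t_zero, one_smul]

end ValSetup
namespace ValSetup

variable {K 𝕜 : Type} [Field K] [Field 𝕜] (V : ValSetup K 𝕜) {m : ℕ}

/-- The reduction of the "lattice part" of a `K`-subspace `W` of polynomials:
a `𝕜`-subspace of `𝕜[x]`. -/
def Ured (w : Fin m → ℝ) (hw : ∀ i, w i ∈ V.Gamma) (W : Submodule K (MvPolynomial (Fin m) K)) :
    Submodule 𝕜 (MvPolynomial (Fin m) 𝕜) where
  carrier := {g | ∃ f, f ∈ W ∧ V.Lmem w f ∧ g = V.piW w f}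
  zero_mem' := ⟨0, W.zero_mem, V.Lmem_zero w, (V.piW_zero w).symm⟩
  add_mem' := by
    rintro g1 g2 ⟨f1, h1, l1, rfl⟩ ⟨f2, h2, l2, rfl⟩
    exact ⟨f1 + f2, W.add_mem h1 h2, V.Lmem_add l1 l2, (V.piW_add hw l1 l2).symm⟩
  smul_mem' := by
    rintro c g ⟨f, hfW, hl, rfl⟩
    obtain ⟨a, ha, rfl⟩ := V.res_surjective c
    exact ⟨a • f, W.smul_mem a hfW, V.Lmem_smul ha hl, (V.piW_smul hw ha hl).symm⟩

lemma mem_Ured_iff {w : Fin m → ℝ} {hw : ∀ i, w i ∈ V.Gamma}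
    {W : Submodule K (MvPolynomial (Fin m) K)} {g : MvPolynomial (Fin m) 𝕜} :
    g ∈ V.Ured w hw W ↔ ∃ f, f ∈ W ∧ V.Lmem w f ∧ g = V.piW w f := Iff.rfl

lemma Ured_mono {w : Fin m → ℝ} (hw : ∀ i, w i ∈ V.Gamma)
    {W W' : Submodule K (MvPolynomial (Fin m) K)} (h : W' ≤ W) :
    V.Ured w hw W' ≤ V.Ured w hw W := by
  rintro g ⟨f, hf, hl, rfl⟩
  exact ⟨f, h hf, hl, rfl⟩

lemma initialForm_zero (w : Fin m → ℝ) : V.initialForm w (0 : MvPolynomial (Fin m) K) = 0 := by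
  rw [initialForm]
  simp [V.res_zero]

lemma initialForm_mem_Ured {w : Fin m → ℝ} (hw : ∀ i, w i ∈ V.Gamma)
    {W : Submodule K (MvPolynomial (Fin m) K)} {f : MvPolynomial (Fin m) K} (hf : f ∈ W) :
    V.initialForm w f ∈ V.Ured w hw W := by
  by_cases hf0 : f = 0
  · rw [hf0, V.initialForm_zero]
    exact (V.Ured w hw W).zero_mem
  · have hγ : -(V.trop f w) ∈ V.Gamma := V.gamma_neg (V.trop_mem_gamma hw hf0)
    refine ⟨V.t (-(V.trop f w)) • f, W.smul_mem _ hf, ?_, V.initialForm_eq_piW hw hf0⟩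
    apply V.Lmem_of_trop_nonneg
    rw [V.trop_smul (V.t_ne_zero hγ) hf0, V.val_t hγ]
    linarith

lemma Ured_le_span {w : Fin m → ℝ} (hw : ∀ i, w i ∈ V.Gamma)
    (W : Submodule K (MvPolynomial (Fin m) K)) :
    V.Ured w hw W ≤ Submodule.span 𝕜 (V.initialForm w '' (W : Set (MvPolynomial (Fin m) K))) := by
  rintro g ⟨f, hf, hl, rfl⟩
  by_cases hf0 : f = 0
  · rw [hf0, V.piW_zero]
    exact Submodule.zero_mem _
  · rcases lt_or_eq_of_le (V.trop_nonneg_of_Lmem hf0 hl) with hpos | hzero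
    · rw [V.piW_eq_zero_of_trop_pos hw hpos]
      exact Submodule.zero_mem _
    · rw [V.piW_eq_initialForm_of_trop_zero hw hf0 hzero.symm]
      exact Submodule.subset_span ⟨f, hf, rfl⟩

lemma support_piW_subset (w : Fin m → ℝ) (f : MvPolynomial (Fin m) K) :
    (V.piW w f).support ⊆ f.support := by
  intro u hu
  rw [mem_support_iff, coeff_piW] at hu
  rw [mem_support_iff]
  intro hc
  rw [hc, mul_zero, V.res_zero] at hu
  exact hu rfl

lemma support_initialForm_subset (w : Fin m → ℝ) (f : MvPolynomial (Fin m) K) :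
    (V.initialForm w f).support ⊆ f.support := by
  intro u hu
  rw [mem_support_iff, coeff_initialForm] at hu
  by_cases h : u ∈ f.support ∧ V.val (coeff u f) + dotN w u = V.trop f w
  · exact h.1
  · rw [if_neg h] at hu; exact absurd rfl hu

lemma exists_support_bound (W : Submodule K (MvPolynomial (Fin m) K))
    [FiniteDimensional K W] :
    ∃ T : Finset (Fin m →₀ ℕ), ∀ f ∈ W, f.support ⊆ T := by
  classical
  obtain ⟨S, hS⟩ := Module.Finite.iff_fg.1 ‹FiniteDimensional K W›
  refine ⟨S.sup (fun f => f.support), ?_⟩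
  intro f hf
  rw [← hS] at hf
  induction hf using Submodule.span_induction with
  | mem x hx =>
      have hx' : x ∈ S := hx
      exact Finset.le_sup (f := fun f => f.support) hx'
  | zero => simp
  | add x y _ _ ihx ihy =>
      exact subset_trans MvPolynomial.support_add (Finset.union_subset ihx ihy)
  | smul a x _ ih => exact subset_trans support_smul ih

lemma mem_span_monomials_of_support_subset {R : Type} [CommRing R] {T : Finset (Fin m →₀ ℕ)}
    {g : MvPolynomial (Fin m) R} (h : g.support ⊆ T) :
    g ∈ Submodule.span R ((fun u => (monomial u (1 : R) : MvPolynomial (Fin m) R)) '' T) := by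
  classical
  rw [g.as_sum]
  apply Submodule.sum_mem
  intro u hu
  have : (monomial u (coeff u g) : MvPolynomial (Fin m) R) = coeff u g • monomial u 1 := by
    rw [smul_monomial, smul_eq_mul, mul_one]
  rw [this]
  exact Submodule.smul_mem _ _ (Submodule.subset_span ⟨u, h hu, rfl⟩)

lemma fd_of_support_bound {R : Type} [Field R] (U : Submodule R (MvPolynomial (Fin m) R))
    (T : Finset (Fin m →₀ ℕ)) (h : ∀ g ∈ U, g.support ⊆ T) : FiniteDimensional R U := by
  have hle : U ≤ Submodule.span R ((fun u => (monomial u (1 : R) : MvPolynomial (Fin m) R)) '' T) :=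
    fun g hg => mem_span_monomials_of_support_subset (h g hg)
  have : FiniteDimensional R
      (Submodule.span R ((fun u => (monomial u (1 : R) : MvPolynomial (Fin m) R)) '' T)) :=
    FiniteDimensional.span_of_finite R ((T.finite_toSet).image _)
  exact Submodule.finiteDimensional_of_le hle

lemma fd_Ured {w : Fin m → ℝ} (hw : ∀ i, w i ∈ V.Gamma)
    (W : Submodule K (MvPolynomial (Fin m) K)) [FiniteDimensional K W] :
    FiniteDimensional 𝕜 (V.Ured w hw W) := by
  obtain ⟨T, hT⟩ := exists_support_bound W
  apply fd_of_support_bound _ T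
  rintro g ⟨f, hf, hl, rfl⟩
  exact subset_trans (V.support_piW_subset w f) (hT f hf)

end ValSetup
namespace ValSetup

variable {K 𝕜 : Type} [Field K] [Field 𝕜] (V : ValSetup K 𝕜) {m : ℕ}

lemma finrank_Ured_le {w : Fin m → ℝ} (hw : ∀ i, w i ∈ V.Gamma)
    (W : Submodule K (MvPolynomial (Fin m) K)) [FiniteDimensional K W] :
    Module.finrank 𝕜 (V.Ured w hw W) ≤ Module.finrank K W := by
  classical
  have hFD : FiniteDimensional 𝕜 (V.Ured w hw W) := V.fd_Ured hw W
  set s := Module.finrank 𝕜 (V.Ured w hw W) with hs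
  let b : Module.Basis (Fin s) 𝕜 (V.Ured w hw W) := Module.finBasis 𝕜 (V.Ured w hw W)
  have hlift : ∀ i : Fin s, ∃ f, f ∈ W ∧ V.Lmem w f ∧
      ((b i : V.Ured w hw W) : MvPolynomial (Fin m) 𝕜) = V.piW w f := fun i => (b i).2
  choose f hfW hfL hfπ using hlift
  have hind : LinearIndependent K fun i => (⟨f i, hfW i⟩ : W) := by
    by_contra hdep
    rw [Fintype.not_linearIndependent_iff] at hdep
    obtain ⟨g, hsum, i0, hi0⟩ := hdep
    have hsum' : ∑ i, g i • f i = 0 := by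
      have := congrArg (fun x : W => (x : MvPolynomial (Fin m) K)) hsum
      simpa [Submodule.coe_sum] using this
    set S : Finset (Fin s) := Finset.univ.filter (fun i => g i ≠ 0) with hS
    have hi0S : i0 ∈ S := by simp [hS, hi0]
    obtain ⟨j, hjS, hjmin⟩ := Finset.exists_min_image S (fun i => V.val (g i)) ⟨i0, hi0S⟩
    have hgj : g j ≠ 0 := by simpa [hS] using hjS
    set c : Fin s → K := fun i => g i * (g j)⁻¹ with hc
    have hcj : c j = 1 := mul_inv_cancel₀ hgj
    have hccond : ∀ i, c i = 0 ∨ 0 ≤ V.val (c i) := by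
      intro i
      by_cases hgi : g i = 0
      · left; rw [hc]; simp [hgi]
      · right
        rw [hc]
        have hiS : i ∈ S := by simp [hS, hgi]
        have := hjmin i hiS
        rw [V.val_mul hgi (inv_ne_zero hgj), V.val_inv hgj]
        linarith
    have hcsum : ∑ i, c i • f i = 0 := by
      have : ∀ i, c i • f i = (g j)⁻¹ • (g i • f i) := by
        intro i
        rw [smul_smul, hc]
        ring_nf
      rw [Finset.sum_congr rfl fun i _ => this i, ← Finset.smul_sum, hsum', smul_zero]
    have hπ : ∑ i, V.res (c i) • V.piW w (f i) = 0 := by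
      have h1 : V.piW w (∑ i, c i • f i) = 0 := by rw [hcsum, V.piW_zero]
      rw [V.piW_sum hw _ _ (fun i _ => V.Lmem_smul (hccond i) (hfL i))] at h1
      rw [← h1]
      exact Finset.sum_congr rfl fun i _ => (V.piW_smul hw (hccond i) (hfL i)).symm
    have hUzero : ∑ i, V.res (c i) • b i = 0 := by
      apply Subtype.ext
      rw [Submodule.coe_sum]
      simpa [hfπ] using hπ
    have := Fintype.linearIndependent_iff.1 b.linearIndependent _ hUzero j
    rw [hcj, V.res_one] at this
    exact one_ne_zero this
  have := hind.fintype_card_le_finrank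
  simpa using this

end ValSetup
namespace ValSetup

variable {K 𝕜 : Type} [Field K] [Field 𝕜] (V : ValSetup K 𝕜) {m : ℕ}

lemma finrank_Ured_ge_aux {w : Fin m → ℝ} (hw : ∀ i, w i ∈ V.Gamma) :
    ∀ (s : ℕ) (W : Submodule K (MvPolynomial (Fin m) K)) (_ : FiniteDimensional K W),
      Module.finrank K W ≤ s → Module.finrank K W ≤ Module.finrank 𝕜 (V.Ured w hw W) := by
  classical
  intro s
  induction s with
  | zero => intro W hFD h; omega
  | succ s ih =>
    intro W hFD hle
    by_cases hs : Module.finrank K W ≤ s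
    · exact ih W hFD hs
    · have hpos : 0 < Module.finrank K W := by omega
      have hWne : W ≠ ⊥ := by
        intro h
        rw [h, finrank_bot] at hpos
        exact absurd hpos (lt_irrefl 0)
      obtain ⟨f₀, hf₀W, hf₀ne⟩ := Submodule.ne_bot_iff W |>.1 hWne
      have hγ : -(V.trop f₀ w) ∈ V.Gamma := V.gamma_neg (V.trop_mem_gamma hw hf₀ne)
      set f := V.t (-(V.trop f₀ w)) • f₀ with hf
      have hfW : f ∈ W := W.smul_mem _ hf₀W
      have hfne : f ≠ 0 := smul_ne_zero (V.t_ne_zero hγ) hf₀ne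
      have htrop : V.trop f w = 0 := by
        rw [hf, V.trop_smul (V.t_ne_zero hγ) hf₀ne, V.val_t hγ]; ring
      have hfL : V.Lmem w f := V.Lmem_of_trop_nonneg (by rw [htrop])
      obtain ⟨u₀, hu₀supp, hu₀⟩ := V.exists_trop_eq (w := w) hfne
      rw [htrop] at hu₀
      have hc0 : coeff u₀ f ≠ 0 := mem_support_iff.1 hu₀supp
      have hπne : coeff u₀ (V.piW w f) ≠ 0 := by
        rw [coeff_piW]
        apply V.res_ne_zero_of_val_zero
          (mul_ne_zero (V.t_ne_zero (V.dotN_mem_gamma hw u₀)) hc0)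
        rw [V.val_mul (V.t_ne_zero (V.dotN_mem_gamma hw u₀)) hc0,
          V.val_t (V.dotN_mem_gamma hw u₀)]
        linarith
      set W' := W ⊓ LinearMap.ker (MvPolynomial.lcoeff K u₀) with hW'def
      have hW'le : W' ≤ W := inf_le_left
      have hW'FD : FiniteDimensional K W' := Submodule.finiteDimensional_of_le hW'le
      have hfnotW' : f ∉ W' := by
        intro hmem
        have h2 : coeff u₀ f = 0 := by
          have := hmem.2
          simpa [LinearMap.mem_ker, MvPolynomial.lcoeff_apply] using this
        exact hc0 h2
      have hW'lt : W' < W := lt_of_le_of_ne hW'le (fun h => hfnotW' (by rw [h]; exact hfW))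
      have hfrlt : Module.finrank K W' < Module.finrank K W :=
        Submodule.finrank_lt_finrank_of_lt hW'lt
      have hsup : W ≤ W' ⊔ Submodule.span K {f} := by
        intro h hh
        have hdecomp : h = (h - (coeff u₀ h / coeff u₀ f) • f) + (coeff u₀ h / coeff u₀ f) • f :=
          (sub_add_cancel h _).symm
        rw [hdecomp]
        apply Submodule.add_mem
        · apply Submodule.mem_sup_left
          refine ⟨W.sub_mem hh (W.smul_mem _ hfW), ?_⟩
          simp only [SetLike.mem_coe, LinearMap.mem_ker, MvPolynomial.lcoeff_apply, coeff_sub,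
            coeff_smul, smul_eq_mul]
          rw [div_mul_cancel₀ _ hc0, sub_self]
        · exact Submodule.mem_sup_right (Submodule.smul_mem _ _ (Submodule.mem_span_singleton_self f))
      have hspanFD : FiniteDimensional K (Submodule.span K ({f} : Set (MvPolynomial (Fin m) K))) :=
        FiniteDimensional.span_of_finite K (Set.finite_singleton f)
      have hsupFD : FiniteDimensional K ((W' ⊔ Submodule.span K {f} :
          Submodule K (MvPolynomial (Fin m) K))) := inferInstance
      have hfr1 : Module.finrank K W ≤ Module.finrank K W' + 1 := by
        have h2 := Submodule.finrank_sup_add_finrank_inf_eq W' (Submodule.span K {f})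
        have h3 : Module.finrank K (Submodule.span K ({f} : Set (MvPolynomial (Fin m) K))) = 1 :=
          finrank_span_singleton hfne
        have h4 : Module.finrank K W ≤
            Module.finrank K ((W' ⊔ Submodule.span K {f} : Submodule K (MvPolynomial (Fin m) K))) :=
          Submodule.finrank_mono hsup
        omega
      have hIH := ih W' hW'FD (by omega)
      have hUle : V.Ured w hw W' ≤ V.Ured w hw W ⊓ LinearMap.ker (MvPolynomial.lcoeff 𝕜 u₀) := by
        rintro g ⟨h, hhW', hhL, rfl⟩
        refine ⟨⟨h, hW'le hhW', hhL, rfl⟩, ?_⟩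
        simp only [SetLike.mem_coe, LinearMap.mem_ker, MvPolynomial.lcoeff_apply, coeff_piW]
        have h0 : coeff u₀ h = 0 := by
          have := hhW'.2
          simpa [LinearMap.mem_ker, MvPolynomial.lcoeff_apply] using this
        rw [h0, mul_zero, V.res_zero]
      have hπmem : V.piW w f ∈ V.Ured w hw W := ⟨f, hfW, hfL, rfl⟩
      have hπnotin : V.piW w f ∉ V.Ured w hw W ⊓ LinearMap.ker (MvPolynomial.lcoeff 𝕜 u₀) := by
        rintro ⟨-, hker⟩
        simp only [SetLike.mem_coe, LinearMap.mem_ker, MvPolynomial.lcoeff_apply] at hker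
        exact hπne hker
      have hUfd : FiniteDimensional 𝕜 (V.Ured w hw W) := V.fd_Ured hw W
      have hinfFD : FiniteDimensional 𝕜
          ((V.Ured w hw W ⊓ LinearMap.ker (MvPolynomial.lcoeff 𝕜 u₀) :
            Submodule 𝕜 (MvPolynomial (Fin m) 𝕜))) :=
        Submodule.finiteDimensional_of_le inf_le_left
      have hUlt : V.Ured w hw W ⊓ LinearMap.ker (MvPolynomial.lcoeff 𝕜 u₀) < V.Ured w hw W :=
        lt_of_le_of_ne inf_le_left (fun h => hπnotin (by rw [h]; exact hπmem))
      have h5 : Module.finrank 𝕜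
          ((V.Ured w hw W ⊓ LinearMap.ker (MvPolynomial.lcoeff 𝕜 u₀) :
            Submodule 𝕜 (MvPolynomial (Fin m) 𝕜))) < Module.finrank 𝕜 (V.Ured w hw W) :=
        Submodule.finrank_lt_finrank_of_lt hUlt
      have h6 : Module.finrank 𝕜 (V.Ured w hw W') ≤ Module.finrank 𝕜
          ((V.Ured w hw W ⊓ LinearMap.ker (MvPolynomial.lcoeff 𝕜 u₀) :
            Submodule 𝕜 (MvPolynomial (Fin m) 𝕜))) :=
        Submodule.finrank_mono hUle
      omega

/-- The key dimension invariance: the reduction of (the lattice part of) a finite-dimensional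
`K`-subspace of polynomials has the same dimension over the residue field. -/
lemma finrank_Ured_eq {w : Fin m → ℝ} (hw : ∀ i, w i ∈ V.Gamma)
    (W : Submodule K (MvPolynomial (Fin m) K)) [FiniteDimensional K W] :
    Module.finrank 𝕜 (V.Ured w hw W) = Module.finrank K W :=
  le_antisymm (V.finrank_Ured_le hw W)
    (V.finrank_Ured_ge_aux hw (Module.finrank K W) W ‹_› le_rfl)

end ValSetup
namespace ValSetup

variable {K 𝕜 : Type} [Field K] [Field 𝕜] (V : ValSetup K 𝕜) {m : ℕ}

lemma isHomogeneous_of_coeff_imp {R : Type} [CommRing R] {g : MvPolynomial (Fin m) R} {e : ℕ}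
    (h : ∀ u, coeff u g ≠ 0 → Finsupp.degree u = e) : g.IsHomogeneous e := by
  intro d hd
  have := h d hd
  rw [Finsupp.degree_eq_weight_one] at this
  exact this

lemma initialForm_isHomogeneous {w : Fin m → ℝ} {f : MvPolynomial (Fin m) K} {e : ℕ}
    (hf : f.IsHomogeneous e) : (V.initialForm w f).IsHomogeneous e := by
  apply isHomogeneous_of_coeff_imp
  intro u hu
  have hs : u ∈ f.support := V.support_initialForm_subset w f (mem_support_iff.2 hu)
  by_contra hne
  exact mem_support_iff.1 hs (hf.coeff_eq_zero hne)

lemma piW_isHomogeneous {w : Fin m → ℝ} {f : MvPolynomial (Fin m) K} {e : ℕ}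
    (hf : f.IsHomogeneous e) : (V.piW w f).IsHomogeneous e := by
  apply isHomogeneous_of_coeff_imp
  intro u hu
  have hs : u ∈ f.support := V.support_piW_subset w f (mem_support_iff.2 hu)
  by_contra hne
  exact mem_support_iff.1 hs (hf.coeff_eq_zero hne)

lemma trop_monomial_mul {w : Fin m → ℝ} {a : K} (ha : a ≠ 0) (hva : V.val a = 0)
    (α : Fin m →₀ ℕ) {f : MvPolynomial (Fin m) K} (hf : f ≠ 0) :
    V.trop (monomial α a * f) w = dotN w α + V.trop f w := by
  have hgne : monomial α a * f ≠ 0 :=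
    mul_ne_zero (fun h => ha (by simpa using congrArg (coeff α) h)) hf
  apply le_antisymm
  · obtain ⟨u, hu, he⟩ := V.exists_trop_eq (w := w) hf
    have hc : coeff u f ≠ 0 := mem_support_iff.1 hu
    have hcg : coeff (α + u) (monomial α a * f) = a * coeff u f := coeff_monomial_mul _ _ _ _
    have hmem : α + u ∈ (monomial α a * f).support := by
      rw [mem_support_iff, hcg]
      exact mul_ne_zero ha hc
    have := V.trop_le (w := w) hmem
    rw [hcg, V.val_mul ha hc, hva, dotN_add'] at this
    linarith
  · obtain ⟨x, hx, he⟩ := V.exists_trop_eq (w := w) hgne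
    have hcx : coeff x (monomial α a * f) ≠ 0 := mem_support_iff.1 hx
    rw [coeff_monomial_mul'] at hcx
    by_cases hle : α ≤ x
    · rw [if_pos hle] at hcx
      have hc : coeff (x - α) f ≠ 0 := fun h => hcx (by rw [h, mul_zero])
      have hxeq : x = α + (x - α) := by
        rw [add_comm]
        exact (tsub_add_cancel_of_le hle).symm
      have hval : V.val (coeff x (monomial α a * f)) = V.val (coeff (x - α) f) := by
        rw [coeff_monomial_mul', if_pos hle, V.val_mul ha hc, hva, zero_add]
      have hdot : dotN w x = dotN w α + dotN w (x - α) := by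
        conv_lhs => rw [hxeq]
        exact dotN_add' w α (x - α)
      have := V.trop_le (w := w) (mem_support_iff.2 hc)
      rw [← he, hval, hdot]
      linarith
    · rw [if_neg hle] at hcx
      exact absurd rfl hcx

lemma initialForm_monomial_mul {w : Fin m → ℝ} {a : K} (ha : a ≠ 0) (hva : V.val a = 0)
    (α : Fin m →₀ ℕ) {f : MvPolynomial (Fin m) K} (hf : f ≠ 0) :
    V.initialForm w (monomial α a * f) = monomial α (V.res a) * V.initialForm w f := by
  have hgne : monomial α a * f ≠ 0 :=
    mul_ne_zero (fun h => ha (by simpa using congrArg (coeff α) h)) hf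
  ext x
  have hRHS : coeff x (monomial α (V.res a) * V.initialForm w f)
      = if α ≤ x then V.res a * coeff (x - α) (V.initialForm w f) else 0 :=
    coeff_monomial_mul' _ _ _ _
  rw [hRHS, coeff_initialForm]
  by_cases hle : α ≤ x
  · rw [if_pos hle, coeff_initialForm]
    set u := x - α with hu
    have hxeq : x = α + u := by
      rw [add_comm]
      exact (tsub_add_cancel_of_le hle).symm
    have hcg : coeff x (monomial α a * f) = a * coeff u f := by
      rw [coeff_monomial_mul', if_pos hle]
    have hdot : dotN w x = dotN w α + dotN w u := by
      conv_lhs => rw [hxeq]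
      exact dotN_add' w α u
    by_cases hmin : u ∈ f.support ∧ V.val (coeff u f) + dotN w u = V.trop f w
    · have hc : coeff u f ≠ 0 := mem_support_iff.1 hmin.1
      have hval : V.val (coeff x (monomial α a * f)) = V.val (coeff u f) := by
        rw [hcg, V.val_mul ha hc, hva, zero_add]
      have hcondg : x ∈ (monomial α a * f).support ∧
          V.val (coeff x (monomial α a * f)) + dotN w x = V.trop (monomial α a * f) w := by
        constructor
        · rw [mem_support_iff, hcg]; exact mul_ne_zero ha hc
        · rw [hval, V.trop_monomial_mul ha hva α hf, hdot]
          linarith [hmin.2]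
      rw [if_pos hcondg, if_pos hmin, hcg]
      have hval' : V.val (a * coeff u f) = V.val (coeff u f) := by
        rw [V.val_mul ha hc, hva, zero_add]
      rw [hval']
      have hγc : -(V.val (coeff u f)) ∈ V.Gamma := V.gamma_neg ⟨_, hc, rfl⟩
      have harg : V.t (-V.val (coeff u f)) * (a * coeff u f)
          = a * (V.t (-V.val (coeff u f)) * coeff u f) := by ring
      have hcond2 : V.t (-V.val (coeff u f)) * coeff u f = 0 ∨
          0 ≤ V.val (V.t (-V.val (coeff u f)) * coeff u f) := by
        right
        rw [V.val_mul (V.t_ne_zero hγc) hc, V.val_t hγc]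
        linarith
      rw [harg, V.res_mul (Or.inr hva.ge) hcond2]
    · rw [if_neg hmin]
      by_cases hc : coeff u f = 0
      · have hz : coeff x (monomial α a * f) = 0 := by rw [hcg, hc, mul_zero]
        rw [if_neg (fun hcond => (mem_support_iff.1 hcond.1) hz), mul_zero]
      · have husupp : u ∈ f.support := mem_support_iff.2 hc
        have hnmin : V.val (coeff u f) + dotN w u ≠ V.trop f w := fun h => hmin ⟨husupp, h⟩
        have hval : V.val (coeff x (monomial α a * f)) = V.val (coeff u f) := by
          rw [hcg, V.val_mul ha hc, hva, zero_add]
        have hcond : ¬(x ∈ (monomial α a * f).support ∧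
            V.val (coeff x (monomial α a * f)) + dotN w x = V.trop (monomial α a * f) w) := by
          rintro ⟨-, habs⟩
          rw [hval, V.trop_monomial_mul ha hva α hf, hdot] at habs
          exact hnmin (by linarith)
        rw [if_neg hcond, mul_zero]
  · rw [if_neg hle]
    have hxz : coeff x (monomial α a * f) = 0 := by rw [coeff_monomial_mul', if_neg hle]
    rw [if_neg (fun hcond => (mem_support_iff.1 hcond.1) hxz)]

end ValSetup
namespace ValSetup

variable {K 𝕜 : Type} [Field K] [Field 𝕜] (V : ValSetup K 𝕜) {m : ℕ}

lemma degree_eq_of_mem_homog {f : MvPolynomial (Fin m) K} {e : ℕ} (hf : f.IsHomogeneous e)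
    {u : Fin m →₀ ℕ} (hu : coeff u f ≠ 0) : Finsupp.degree u = e := by
  by_contra hne
  exact hu (hf.coeff_eq_zero hne)

lemma trop_le_trop_homogeneousComponent {w : Fin m → ℝ} {f : MvPolynomial (Fin m) K} (e : ℕ)
    (h : homogeneousComponent e f ≠ 0) :
    V.trop f w ≤ V.trop (homogeneousComponent e f) w := by
  obtain ⟨x, hx, hxe⟩ := V.exists_trop_eq (w := w) h
  have hcx : coeff x (homogeneousComponent e f) ≠ 0 := mem_support_iff.1 hx
  have hdeg : Finsupp.degree x = e :=
    degree_eq_of_mem_homog (homogeneousComponent_isHomogeneous e f) hcx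
  have hceq : coeff x (homogeneousComponent e f) = coeff x f := by
    rw [coeff_homogeneousComponent, if_pos hdeg]
  have hcf : coeff x f ≠ 0 := hceq ▸ hcx
  have := V.trop_le (w := w) (mem_support_iff.2 hcf)
  rw [← hxe, hceq]
  exact this

lemma initialForm_decomp {w : Fin m → ℝ} (f : MvPolynomial (Fin m) K) :
    V.initialForm w f = ∑ e ∈ (Finset.range (f.totalDegree + 1)).filter
      (fun e => homogeneousComponent e f ≠ 0 ∧
        V.trop (homogeneousComponent e f) w = V.trop f w),
      V.initialForm w (homogeneousComponent e f) := by
  classical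
  set E := (Finset.range (f.totalDegree + 1)).filter
      (fun e => homogeneousComponent e f ≠ 0 ∧
        V.trop (homogeneousComponent e f) w = V.trop f w) with hE
  ext u
  rw [coeff_sum]
  set e₀ := Finsupp.degree u with he₀
  have hother : ∀ e ∈ E, e ≠ e₀ → coeff u (V.initialForm w (homogeneousComponent e f)) = 0 := by
    intro e _ hne
    rw [coeff_initialForm]
    apply if_neg
    rintro ⟨hsup, -⟩
    have hc := mem_support_iff.1 hsup
    rw [coeff_homogeneousComponent] at hc
    rw [if_neg (by rw [← he₀]; exact fun h => hne h.symm)] at hc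
    exact hc rfl
  by_cases hmem : e₀ ∈ E
  · rw [Finset.sum_eq_single_of_mem e₀ hmem hother]
    obtain ⟨hcomp_ne, htropeq⟩ := (Finset.mem_filter.1 hmem).2
    have hceq : coeff u (homogeneousComponent e₀ f) = coeff u f := by
      rw [coeff_homogeneousComponent, if_pos he₀.symm]
    rw [coeff_initialForm, coeff_initialForm]
    by_cases hmin : u ∈ f.support ∧ V.val (coeff u f) + dotN w u = V.trop f w
    · have hcond : u ∈ (homogeneousComponent e₀ f).support ∧
          V.val (coeff u (homogeneousComponent e₀ f)) + dotN w u
            = V.trop (homogeneousComponent e₀ f) w := by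
        constructor
        · rw [mem_support_iff, hceq]; exact mem_support_iff.1 hmin.1
        · rw [hceq, htropeq]; exact hmin.2
      rw [if_pos hmin, if_pos hcond, hceq]
    · have hcond : ¬(u ∈ (homogeneousComponent e₀ f).support ∧
          V.val (coeff u (homogeneousComponent e₀ f)) + dotN w u
            = V.trop (homogeneousComponent e₀ f) w) := by
        rintro ⟨hs, hm⟩
        rw [hceq, htropeq] at hm
        exact hmin ⟨mem_support_iff.2 (by rw [← hceq]; exact mem_support_iff.1 hs), hm⟩
      rw [if_neg hmin, if_neg hcond]
  · rw [Finset.sum_eq_zero (fun e he => hother e he (fun h => hmem (h ▸ he)))]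
    rw [coeff_initialForm]
    apply if_neg
    rintro ⟨hsup, hminu⟩
    have hcnz : coeff u f ≠ 0 := mem_support_iff.1 hsup
    have hceq : coeff u (homogeneousComponent e₀ f) = coeff u f := by
      rw [coeff_homogeneousComponent, if_pos he₀.symm]
    have hcompne : homogeneousComponent e₀ f ≠ 0 := by
      intro h
      rw [h, coeff_zero] at hceq
      exact hcnz hceq.symm
    have hle : V.trop f w ≤ V.trop (homogeneousComponent e₀ f) w :=
      V.trop_le_trop_homogeneousComponent e₀ hcompne
    have hge : V.trop (homogeneousComponent e₀ f) w ≤ V.val (coeff u f) + dotN w u := by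
      have := V.trop_le (w := w) (mem_support_iff.2 (by rw [hceq]; exact hcnz))
      rwa [hceq] at this
    have htropeq : V.trop (homogeneousComponent e₀ f) w = V.trop f w := by
      rw [hminu] at hge
      linarith
    have hrange : e₀ ∈ Finset.range (f.totalDegree + 1) := by
      rw [Finset.mem_range, Nat.lt_succ_iff, he₀]
      have := le_totalDegree hsup
      simpa [Finsupp.degree_apply, Finsupp.sum] using this
    exact hmem (by rw [hE]; exact Finset.mem_filter.2 ⟨hrange, hcompne, htropeq⟩)

end ValSetup
namespace ValSetup

variable {K 𝕜 : Type} [Field K] [Field 𝕜] (V : ValSetup K 𝕜) {m : ℕ}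

/-- The degree-`d` homogeneous part of a (homogeneous) ideal, as a `K`-subspace. -/
def WD (I : Ideal (MvPolynomial (Fin m) K)) (d : ℕ) : Submodule K (MvPolynomial (Fin m) K) :=
  Submodule.restrictScalars K I ⊓ homogeneousSubmodule (Fin m) K d

lemma mem_WD {I : Ideal (MvPolynomial (Fin m) K)} {d : ℕ} {f : MvPolynomial (Fin m) K} :
    f ∈ WD I d ↔ f ∈ I ∧ f.IsHomogeneous d := by
  rw [WD, Submodule.mem_inf, Submodule.restrictScalars_mem, mem_homogeneousSubmodule]

lemma fd_WD (I : Ideal (MvPolynomial (Fin m) K)) (d : ℕ) : FiniteDimensional K (WD I d) := by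
  classical
  apply fd_of_support_bound (R := K) _ ((Finset.univ : Finset (Fin m → Fin (d+1))).image
    (fun v => Finsupp.equivFunOnFinite.symm (fun i => (v i : ℕ))))
  intro f hf u hu
  have hdeg : Finsupp.degree u = d :=
    degree_eq_of_mem_homog (mem_WD.1 hf).2 (mem_support_iff.1 hu)
  have hle : ∀ i, u i ≤ d := by
    intro i
    by_cases hi : i ∈ u.support
    · rw [← hdeg, Finsupp.degree]
      exact Finset.single_le_sum (fun j _ => Nat.zero_le _) hi
    · rw [Finsupp.notMem_support_iff.1 hi]
      exact Nat.zero_le d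
  refine Finset.mem_image.2 ⟨fun i => ⟨u i, Nat.lt_succ_of_le (hle i)⟩, Finset.mem_univ _, ?_⟩
  rw [Equiv.symm_apply_eq]
  funext i
  simp [Finsupp.equivFunOnFinite]

lemma Ured_le_initialIdeal {w : Fin m → ℝ} (hw : ∀ i, w i ∈ V.Gamma)
    (I : Ideal (MvPolynomial (Fin m) K)) (d : ℕ) {g : MvPolynomial (Fin m) 𝕜}
    (hg : g ∈ V.Ured w hw (WD I d)) : g ∈ V.initialIdeal w I := by
  have h1 := V.Ured_le_span hw (WD I d) hg
  have h2 : Submodule.span 𝕜 (V.initialForm w '' ((WD I d : Submodule K (MvPolynomial (Fin m) K)) : Set (MvPolynomial (Fin m) K)))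
      ≤ Submodule.restrictScalars 𝕜 (V.initialIdeal w I) := by
    rw [Submodule.span_le]
    rintro g' ⟨f, hf, rfl⟩
    exact Ideal.subset_span ⟨f, (mem_WD.1 hf).1, rfl⟩
  have h3 := h2 h1
  rwa [Submodule.restrictScalars_mem] at h3

lemma Ured_le_homog {w : Fin m → ℝ} (hw : ∀ i, w i ∈ V.Gamma)
    (I : Ideal (MvPolynomial (Fin m) K)) (d : ℕ) {g : MvPolynomial (Fin m) 𝕜}
    (hg : g ∈ V.Ured w hw (WD I d)) : g ∈ homogeneousSubmodule (Fin m) 𝕜 d := by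
  obtain ⟨f, hf, hl, rfl⟩ := hg
  exact (mem_homogeneousSubmodule _ _).2 (V.piW_isHomogeneous (mem_WD.1 hf).2)

lemma monomial_mul_mem_span {w : Fin m → ℝ} {I : Ideal (MvPolynomial (Fin m) K)}
    (α : Fin m →₀ ℕ) (c : 𝕜) {g : MvPolynomial (Fin m) 𝕜}
    (hg : g ∈ Submodule.span 𝕜 (V.initialForm w '' {f | f ∈ I ∧ ∃ d : ℕ, f.IsHomogeneous d})) :
    monomial α c * g ∈
      Submodule.span 𝕜 (V.initialForm w '' {f | f ∈ I ∧ ∃ d : ℕ, f.IsHomogeneous d}) := by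
  classical
  induction hg using Submodule.span_induction with
  | mem x hx =>
      obtain ⟨f, ⟨hfI, d, hd⟩, rfl⟩ := hx
      by_cases hc : c = 0
      · rw [hc, monomial_zero, zero_mul]
        exact Submodule.zero_mem _
      obtain ⟨a, hcond, hres⟩ := V.res_surjective c
      have ha : a ≠ 0 := by
        rintro rfl
        rw [V.res_zero] at hres
        exact hc hres.symm
      have hva : V.val a = 0 := by
        have hnlt : ¬(0 < V.val a) := fun hpos => hc (hres ▸ V.res_eq_zero_of_val_pos hpos)
        rcases hcond with h | h
        · exact absurd h ha
        · exact le_antisymm (not_lt.1 hnlt) h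
      by_cases hf0 : f = 0
      · rw [hf0, V.initialForm_zero, mul_zero]
        exact Submodule.zero_mem _
      · rw [← hres, ← V.initialForm_monomial_mul ha hva α hf0]
        exact Submodule.subset_span ⟨monomial α a * f, ⟨I.mul_mem_left _ hfI,
          Finsupp.degree α + d, (isHomogeneous_monomial _ rfl).mul hd⟩, rfl⟩
  | zero => rw [mul_zero]; exact Submodule.zero_mem _
  | add x y _ _ ihx ihy => rw [mul_add]; exact Submodule.add_mem _ ihx ihy
  | smul c' x _ ih => rw [mul_smul_comm]; exact Submodule.smul_mem _ _ ih

lemma mul_mem_span {w : Fin m → ℝ} {I : Ideal (MvPolynomial (Fin m) K)}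
    (p : MvPolynomial (Fin m) 𝕜) {g : MvPolynomial (Fin m) 𝕜}
    (hg : g ∈ Submodule.span 𝕜 (V.initialForm w '' {f | f ∈ I ∧ ∃ d : ℕ, f.IsHomogeneous d})) :
    p * g ∈ Submodule.span 𝕜 (V.initialForm w '' {f | f ∈ I ∧ ∃ d : ℕ, f.IsHomogeneous d}) := by
  classical
  rw [p.as_sum, Finset.sum_mul]
  exact Submodule.sum_mem _ (fun α hα => V.monomial_mul_mem_span α _ hg)

lemma initialIdeal_le_span {w : Fin m → ℝ} {I : Ideal (MvPolynomial (Fin m) K)}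
    (hI : IsHomogIdeal I) {h : MvPolynomial (Fin m) 𝕜} (hh : h ∈ V.initialIdeal w I) :
    h ∈ Submodule.span 𝕜 (V.initialForm w '' {f | f ∈ I ∧ ∃ d : ℕ, f.IsHomogeneous d}) := by
  classical
  rw [initialIdeal] at hh
  induction hh using Submodule.span_induction with
  | mem x hx =>
      obtain ⟨f, hfI, rfl⟩ := hx
      by_cases hf0 : f = 0
      · rw [hf0, V.initialForm_zero]
        exact Submodule.zero_mem _
      rw [V.initialForm_decomp f]
      exact Submodule.sum_mem _ (fun e he => Submodule.subset_span ⟨homogeneousComponent e f,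
        ⟨hI f hfI e, e, homogeneousComponent_isHomogeneous e f⟩, rfl⟩)
  | zero => exact Submodule.zero_mem _
  | add x y _ _ ihx ihy => exact Submodule.add_mem _ ihx ihy
  | smul a x _ ih => rw [smul_eq_mul]; exact V.mul_mem_span a ih

lemma homogeneousComponent_initialIdeal {w : Fin m → ℝ} (hw : ∀ i, w i ∈ V.Gamma)
    {I : Ideal (MvPolynomial (Fin m) K)} (hI : IsHomogIdeal I) (d : ℕ)
    {h : MvPolynomial (Fin m) 𝕜} (hh : h ∈ V.initialIdeal w I) :
    homogeneousComponent d h ∈ V.Ured w hw (WD I d) := by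
  classical
  have hsp := V.initialIdeal_le_span hI hh
  clear hh
  induction hsp using Submodule.span_induction with
  | mem x hx =>
      obtain ⟨f, ⟨hfI, e, he⟩, rfl⟩ := hx
      have hx' : V.initialForm w f ∈ homogeneousSubmodule (Fin m) 𝕜 e :=
        (mem_homogeneousSubmodule _ _).2 (V.initialForm_isHomogeneous he)
      rw [homogeneousComponent_of_mem hx']
      by_cases hde : d = e
      · rw [if_pos hde]
        subst hde
        exact V.initialForm_mem_Ured hw (mem_WD.2 ⟨hfI, he⟩)
      · rw [if_neg hde]
        exact Submodule.zero_mem _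
  | zero => rw [map_zero]; exact Submodule.zero_mem _
  | add x y _ _ ihx ihy => rw [map_add]; exact Submodule.add_mem _ ihx ihy
  | smul c x _ ih => rw [map_smul]; exact Submodule.smul_mem _ _ ih

end ValSetup
/-- (From the proof of Proposition 3.5, via [Maclagan, Antichains].)  If `in_{w₁}(I)` and
`in_{w₂}(I)` are both monomial initial ideals of a homogeneous ideal `I ⊆ K[x_0,…,x_n]`,
then `in_{w₂}(I)` is not strictly contained in `in_{w₁}(I)`. -/
theorem monomial_initialIdeal_not_ssubset {K 𝕜 : Type} [Field K] [Field 𝕜] (V : ValSetup K 𝕜)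
    (hdense : Dense V.Gamma) (hQ : ∀ q : ℚ, (q : ℝ) ∈ V.Gamma) {n : ℕ}
    (I : Ideal (MvPolynomial (Fin (n+1)) K)) (hI : IsHomogIdeal I)
    (w₁ w₂ : Fin (n+1) → ℝ) (hw₁ : ∀ i, w₁ i ∈ V.Gamma) (hw₂ : ∀ i, w₂ i ∈ V.Gamma)
    (hm₁ : IsMonomialIdeal (V.initialIdeal w₁ I))
    (hm₂ : IsMonomialIdeal (V.initialIdeal w₂ I)) :
    ¬ (V.initialIdeal w₂ I < V.initialIdeal w₁ I) := by
  classical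
  intro hlt
  have hle21 : V.initialIdeal w₂ I ≤ V.initialIdeal w₁ I := le_of_lt hlt
  have hEq : ∀ d : ℕ, V.Ured w₂ hw₂ (ValSetup.WD I d) = V.Ured w₁ hw₁ (ValSetup.WD I d) := by
    intro d
    have hFD : FiniteDimensional K (ValSetup.WD I d) := ValSetup.fd_WD I d
    have hFD1 : FiniteDimensional 𝕜 (V.Ured w₁ hw₁ (ValSetup.WD I d)) := V.fd_Ured hw₁ _
    have hrk1 := V.finrank_Ured_eq hw₁ (ValSetup.WD I d)
    have hrk2 := V.finrank_Ured_eq hw₂ (ValSetup.WD I d)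
    have hle : V.Ured w₂ hw₂ (ValSetup.WD I d) ≤ V.Ured w₁ hw₁ (ValSetup.WD I d) := by
      intro g hg
      have hg2 : g ∈ V.initialIdeal w₂ I := V.Ured_le_initialIdeal hw₂ I d hg
      have hg1 : g ∈ V.initialIdeal w₁ I := hle21 hg2
      have hcomp := V.homogeneousComponent_initialIdeal hw₁ hI d hg1
      have hghom : g ∈ homogeneousSubmodule (Fin (n+1)) 𝕜 d := V.Ured_le_homog hw₂ I d hg
      rwa [homogeneousComponent_of_mem hghom, if_pos rfl] at hcomp
    exact Submodule.eq_of_le_of_finrank_le hle (le_of_eq (hrk1.trans hrk2.symm))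
  have hle12 : V.initialIdeal w₁ I ≤ V.initialIdeal w₂ I := by
    intro h hh
    have hsum := sum_homogeneousComponent h
    rw [← hsum]
    refine Submodule.sum_mem _ (fun i _ => ?_)
    have h1 := V.homogeneousComponent_initialIdeal hw₁ hI i hh
    rw [← hEq i] at h1
    exact V.Ured_le_initialIdeal hw₂ I i h1
  exact hlt.not_ge hle12
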